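/- (ℓ2-calibration.) There is an absolute constant C such that for every horizon T ≥ 1 there exists a forecasting strategy — a family of maps taking the outcomes b_1,…,b_{t−1} ∈ {0,1}^{t−1} to a finitely supported probability distribution x_t on [0,1] — such that for every sequence b_1,…,b_T ∈ {0,1}, the ℓ2-calibration error satisfies Cal(x_{1:T}, b_{1:T}) ≤ C · T^{1/3} · log(T+1). -/

import Mathlib

/-- The `ℓ₂`-calibration error of forecasts `x t` (finitely supported
distributions on `[0,1]`) against outcomes `b t ∈ {0,1}`. -/
noncomputable def calibrationError (T : ℕ) (x : Fin T → (ℝ →₀ ℝ)) (b : Fin T → ℝ) : ℝ :=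
  ∑ p ∈ Finset.univ.biUnion (fun t : Fin T => (x t).support),
    (∑ t : Fin T, x t p) *
      (p - (∑ t : Fin T, b t * x t p) / (∑ t : Fin T, x t p)) ^ 2

namespace CalProof

open Finset

/-! ### Elementary per-point potential bound -/

lemma pp_bound {w D lam e : ℝ} (hw : 1 ≤ w) (hl0 : 0 ≤ lam) (hl1 : lam ≤ 1)
    (hD : |D| ≤ w) (he : |e| ≤ 1) :
    (D + lam * e)^2 / (w + lam) - D^2 / w ≤
      lam * (2 * (D/w) * e - (D/w)^2 / 2) + 3 * (Real.log (w + lam) - Real.log w) := by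
  have hw0 : (0:ℝ) < w := by linarith
  have hwl : (0:ℝ) < w + lam := by linarith
  have hlog : lam^2 / (w + lam) ≤ Real.log (w + lam) - Real.log w := by
    have h1 : Real.log (w / (w + lam)) ≤ w / (w + lam) - 1 :=
      Real.log_le_sub_one_of_pos (by positivity)
    have h2 : Real.log (w / (w + lam)) = Real.log w - Real.log (w + lam) :=
      Real.log_div (ne_of_gt hw0) (ne_of_gt hwl)
    have h3 : w / (w + lam) - 1 = -(lam / (w + lam)) := by field_simp; ring
    have h4 : lam / (w + lam) ≤ Real.log (w + lam) - Real.log w := by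
      rw [h2, h3] at h1; linarith
    have h5 : lam^2 / (w + lam) ≤ lam / (w + lam) := by
      gcongr
      nlinarith
    linarith
  have hpoly : (D + lam * e)^2 / (w + lam) - D^2 / w ≤
      lam * (2 * (D/w) * e - (D/w)^2 / 2) + 3 * (lam^2 / (w + lam)) := by
    set u := D / w with hu
    have hDu : D = u * w := by rw [hu, div_mul_cancel₀ _ (ne_of_gt hw0)]
    have hu1 : |u| ≤ 1 := by
      rw [hu, abs_div, abs_of_pos hw0, div_le_one hw0]; exact hD
    have habs : |u * e| ≤ 1 := by
      rw [abs_mul]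
      exact mul_le_one₀ hu1 (abs_nonneg e) he
    have hue := abs_le.1 habs
    have he2 : e^2 ≤ 1 := by nlinarith [abs_le.1 he]
    rw [div_sub_div _ _ (ne_of_gt hwl) (ne_of_gt hw0), div_le_iff₀ (by positivity)]
    rw [hDu]
    have hexp : (lam * (2 * u * e - u^2/2) + 3 * (lam^2/(w+lam))) * ((w+lam) * w)
        = lam * (2 * u * e - u^2/2) * ((w+lam) * w) + 3 * lam^2 * w := by
      field_simp
    rw [hexp]
    have keysum : 0 ≤ lam * (2 * (1 + u*e)) + lam * (1 - e^2) + u^2 * (w - lam) / 2 := by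
      have k1 : 0 ≤ lam * (2 * (1 + u*e)) := by
        apply mul_nonneg hl0; linarith [hue.1]
      have k2 : 0 ≤ lam * (1 - e^2) := by
        apply mul_nonneg hl0; linarith
      have k3 : 0 ≤ u^2 * (w - lam) / 2 := by
        have : 0 ≤ w - lam := by linarith
        positivity
      linarith
    have hprod : 0 ≤ lam * w * (lam * (2 * (1 + u*e)) + lam * (1 - e^2) + u^2 * (w - lam) / 2) :=
      mul_nonneg (mul_nonneg hl0 hw0.le) keysum
    nlinarith [hprod]
  linarith

/-! ### Sums of pure/pair coefficient vectors -/

lemma sum_pure (m i : ℕ) (hi : i ∈ Finset.range (m+1)) (E : ℕ → ℝ) :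
    ∑ j ∈ Finset.range (m+1), (if j = i then (1:ℝ) else 0) * E j = E i := by
  have h : ∀ j ∈ Finset.range (m+1),
      (if j = i then (1:ℝ) else 0) * E j = if j = i then E j else 0 := by
    intro j _; split_ifs <;> ring
  rw [Finset.sum_congr rfl h, Finset.sum_ite_eq' (Finset.range (m+1)) i E, if_pos hi]

lemma sum_pair (m p q : ℕ) (hpq : p ≠ q) (hp : p ∈ Finset.range (m+1))
    (hq : q ∈ Finset.range (m+1)) (lam : ℝ) (E : ℕ → ℝ) :
    ∑ j ∈ Finset.range (m+1),
      (if j = p then lam else if j = q then 1 - lam else 0) * E j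
      = lam * E p + (1 - lam) * E q := by
  have h : ∀ j ∈ Finset.range (m+1),
      (if j = p then lam else if j = q then 1 - lam else 0) * E j
      = (if j = p then lam * E j else 0) + (if j = q then (1-lam) * E j else 0) := by
    intro j _
    rcases eq_or_ne j p with rfl | h1
    · have : ¬ (j = q) := fun h => hpq h
      simp [this]
    · rcases eq_or_ne j q with rfl | h2
      · simp [h1]
      · simp [h1, h2]
  rw [Finset.sum_congr rfl h, Finset.sum_add_distrib,
    Finset.sum_ite_eq' (Finset.range (m+1)) p (fun j => lam * E j),
    Finset.sum_ite_eq' (Finset.range (m+1)) q (fun j => (1-lam) * E j),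
    if_pos hp, if_pos hq]

/-! ### Existence of a good move -/

lemma exists_good_move (m : ℕ) (hm : 1 ≤ m) (u : ℕ → ℝ) :
    ∃ c : ℕ → ℝ, (∀ i, 0 ≤ c i) ∧ (∀ i, c i ≤ 1) ∧ (∀ i, m < i → c i = 0) ∧
      (∑ i ∈ Finset.range (m+1), c i) = 1 ∧
      ∀ b : ℝ, (b = 0 ∨ b = 1) →
        ∑ i ∈ Finset.range (m+1),
          c i * (2 * u i * (b - (i:ℝ)/m) - (u i)^2/2) ≤ 2/(m:ℝ)^2 := by
  have hM : (0:ℝ) < (m:ℝ) := by exact_mod_cast hm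
  have hM2 : (0:ℝ) ≤ 2/(m:ℝ)^2 := by positivity
  have pure_works : ∀ i, i ∈ Finset.range (m+1) →
      (∀ b : ℝ, (b = 0 ∨ b = 1) → 2 * u i * (b - (i:ℝ)/m) - (u i)^2/2 ≤ 2/(m:ℝ)^2) →
      ∃ c : ℕ → ℝ, (∀ i, 0 ≤ c i) ∧ (∀ i, c i ≤ 1) ∧ (∀ i, m < i → c i = 0) ∧
      (∑ i ∈ Finset.range (m+1), c i) = 1 ∧
      ∀ b : ℝ, (b = 0 ∨ b = 1) →
        ∑ i ∈ Finset.range (m+1),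
          c i * (2 * u i * (b - (i:ℝ)/m) - (u i)^2/2) ≤ 2/(m:ℝ)^2 := by
    intro i hi hgood
    refine ⟨fun j => if j = i then 1 else 0, ?_, ?_, ?_, ?_, ?_⟩
    · intro j; dsimp only; split_ifs <;> norm_num
    · intro j; dsimp only; split_ifs <;> norm_num
    · intro j hj
      have hne : j ≠ i := by
        simp only [Finset.mem_range] at hi; omega
      simp [hne]
    · simpa using sum_pure m i hi (fun _ => (1:ℝ))
    · intro b hb
      rw [sum_pure m i hi (fun j => 2 * u j * (b - (j:ℝ)/m) - (u j)^2/2)]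
      exact hgood b hb
  by_cases h1 : 0 ≤ u m
  · refine pure_works m (by simp) ?_
    intro b hb
    have hmm : (m:ℝ)/m = 1 := div_self (ne_of_gt hM)
    have hb1 : b ≤ 1 := by rcases hb with rfl | rfl <;> norm_num
    have hle : 2 * u m * (b - (m:ℝ)/m) - (u m)^2/2 ≤ 0 := by
      rw [hmm]; nlinarith [sq_nonneg (u m)]
    exact hle.trans hM2
  by_cases h2 : u 0 ≤ 0
  · refine pure_works 0 (by simp) ?_
    intro b hb
    have hb0 : 0 ≤ b := by rcases hb with rfl | rfl <;> norm_num
    have hle : 2 * u 0 * (b - (0:ℕ)/(m:ℝ)) - (u 0)^2/2 ≤ 0 := by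
      simp only [Nat.cast_zero, zero_div, sub_zero]
      nlinarith [sq_nonneg (u 0)]
    exact hle.trans hM2
  push_neg at h1 h2
  have hne : ((Finset.range (m+1)).filter (fun i => 0 < u i)).Nonempty :=
    ⟨0, by simp [h2]⟩
  obtain ⟨k, hkmem, hkmax⟩ : ∃ k ∈ (Finset.range (m+1)).filter (fun i => 0 < u i),
      ∀ x ∈ (Finset.range (m+1)).filter (fun i => 0 < u i), x ≤ k :=
    ⟨_, Finset.max'_mem _ hne, fun x hx => Finset.le_max' _ x hx⟩
  rw [Finset.mem_filter, Finset.mem_range] at hkmem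
  have huk : 0 < u k := hkmem.2
  have hkm : k < m := by
    rcases Nat.lt_or_ge k m with h | h
    · exact h
    · exfalso
      have : k = m := by omega
      rw [this] at huk; linarith
  have hk1r : k + 1 ∈ Finset.range (m+1) := by simp; omega
  have hk1np : ¬ (0 < u (k+1)) := by
    intro hpos
    have : k + 1 ≤ k := hkmax _ (by rw [Finset.mem_filter]; exact ⟨hk1r, hpos⟩)
    omega
  by_cases h3 : u (k+1) = 0
  · refine pure_works (k+1) hk1r ?_
    intro b hb
    have hle : 2 * u (k+1) * (b - ((k+1:ℕ):ℝ)/m) - (u (k+1))^2/2 ≤ 0 := by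
      rw [h3]; ring_nf; norm_num
    exact hle.trans hM2
  have huk1 : u (k+1) < 0 := lt_of_le_of_ne (not_lt.1 hk1np) h3
  have hs0 : (0:ℝ) < u k - u (k+1) := by linarith
  set lam : ℝ := (- u (k+1)) / (u k - u (k+1)) with hlam
  have hlam0 : 0 < lam := by apply div_pos; linarith; exact hs0
  have hlam1 : lam < 1 := by
    rw [hlam, div_lt_one hs0]; linarith
  refine ⟨fun j => if j = k then lam else if j = k+1 then 1 - lam else 0, ?_, ?_, ?_, ?_, ?_⟩
  · intro j; dsimp only; split_ifs <;> linarith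
  · intro j; dsimp only; split_ifs <;> linarith
  · intro j hj
    have e1 : j ≠ k := by omega
    have e2 : j ≠ k + 1 := by omega
    simp [e1, e2]
  · have h := sum_pair m k (k+1) (by omega) (by simp; omega) hk1r lam (fun _ => (1:ℝ))
    simp only [mul_one] at h
    rw [h]; ring
  · intro b hb
    rw [sum_pair m k (k+1) (by omega) (by simp; omega) hk1r lam
      (fun j => 2 * u j * (b - (j:ℝ)/m) - (u j)^2/2)]
    set a : ℝ := lam * u k with ha
    have ha0 : 0 < a := mul_pos hlam0 huk
    have hbal : lam * u k + (1 - lam) * u (k+1) = 0 := by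
      rw [hlam]; field_simp; ring
    have h4a : 4 * a ≤ u k - u (k+1) := by
      have ha' : a = u k * (- u (k+1)) / (u k - u (k+1)) := by rw [ha, hlam]; ring
      have hprod : a * (u k - u (k+1)) = u k * (- u (k+1)) := by
        rw [ha', div_mul_cancel₀ _ (ne_of_gt hs0)]
      nlinarith [sq_nonneg (u k + u (k+1)), hs0]
    clear_value a lam
    have hcast : ((k+1:ℕ):ℝ) = (k:ℝ) + 1 := by push_cast; ring
    have geq : lam * (2 * u k * (b - (k:ℝ)/m) - (u k)^2/2)
        + (1 - lam) * (2 * u (k+1) * (b - ((k+1:ℕ):ℝ)/m) - (u (k+1))^2/2)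
        = 2 * a * (((k:ℝ)+1)/m - (k:ℝ)/m) - a * (u k - u (k+1)) / 2 := by
      rw [hcast]
      linear_combination (2*b - 2*(((k:ℝ)+1)/m) - u (k+1)/2) * hbal
        + (-2*(((k:ℝ)+1)/m) + 2*((k:ℝ)/m) + (u k - u (k+1))/2) * ha
    rw [geq]
    have hWV : ((k:ℝ)+1)/m - (k:ℝ)/m = 1/m := by field_simp; ring
    rw [hWV, show (2:ℝ)/(m:ℝ)^2 = 2*(1/(m:ℝ))^2 by ring]
    have final : ∀ t : ℝ, 2*a*t - a*(u k - u (k+1))/2 ≤ 2*t^2 := by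
      intro t
      nlinarith [mul_nonneg ha0.le (by linarith : (0:ℝ) ≤ u k - u (k+1) - 4*a),
        sq_nonneg (t - a), sq_nonneg t, sq_nonneg a]
    exact final (1/(m:ℝ))

/-! ### The algorithm -/

noncomputable def move (m t : ℕ) (w D : ℕ → ℝ) : ℕ → ℝ :=
  if h : 1 ≤ m ∧ m < t then
    Classical.choose (exists_good_move m h.1 (fun i => D i / w i))
  else fun j => if j = min t m then 1 else 0

lemma move_nonneg (m t : ℕ) (w D : ℕ → ℝ) (j : ℕ) : 0 ≤ move m t w D j := by
  unfold move
  split_ifs with h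
  · exact (Classical.choose_spec (exists_good_move m h.1 (fun i => D i / w i))).1 j
  · dsimp only; split_ifs <;> norm_num

lemma move_le_one (m t : ℕ) (w D : ℕ → ℝ) (j : ℕ) : move m t w D j ≤ 1 := by
  unfold move
  split_ifs with h
  · exact (Classical.choose_spec (exists_good_move m h.1 (fun i => D i / w i))).2.1 j
  · dsimp only; split_ifs <;> norm_num

lemma move_zero_of_gt (m t : ℕ) (w D : ℕ → ℝ) (j : ℕ) (hj : m < j) : move m t w D j = 0 := by
  unfold move
  split_ifs with h
  · exact (Classical.choose_spec (exists_good_move m h.1 (fun i => D i / w i))).2.2.1 j hj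
  · dsimp only
    have : j ≠ min t m := by omega
    simp [this]

lemma move_sum (m t : ℕ) (w D : ℕ → ℝ) :
    ∑ i ∈ Finset.range (m+1), move m t w D i = 1 := by
  unfold move
  split_ifs with h
  · exact (Classical.choose_spec (exists_good_move m h.1 (fun i => D i / w i))).2.2.2.1
  · have hmem : min t m ∈ Finset.range (m+1) := by
      simp only [Finset.mem_range]; omega
    simpa using sum_pure m (min t m) hmem (fun _ => (1:ℝ))

lemma move_init (m t : ℕ) (w D : ℕ → ℝ) (ht : t ≤ m) :
    move m t w D = fun j => if j = t then (1:ℝ) else 0 := by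
  unfold move
  rw [dif_neg (by omega)]
  have : min t m = t := by omega
  rw [this]

lemma move_main (m t : ℕ) (w D : ℕ → ℝ) (h1 : 1 ≤ m) (h2 : m < t) :
    ∀ b : ℝ, (b = 0 ∨ b = 1) →
      ∑ i ∈ Finset.range (m+1),
        move m t w D i * (2 * (D i / w i) * (b - (i:ℝ)/m) - (D i / w i)^2/2) ≤ 2/(m:ℝ)^2 := by
  intro b hb
  unfold move
  rw [dif_pos ⟨h1, h2⟩]
  exact (Classical.choose_spec (exists_good_move m h1 (fun i => D i / w i))).2.2.2.2 b hb

noncomputable def St (m : ℕ) : (t : ℕ) → (Fin t → ℝ) → ((ℕ → ℝ) × (ℕ → ℝ))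
  | 0, _ => (fun _ => 0, fun _ => 0)
  | (t+1), h =>
    let p := St m t (fun s => h s.castSucc)
    let c := move m t p.1 p.2
    (fun i => p.1 i + c i, fun i => p.2 i + c i * (h (Fin.last t) - (i:ℝ)/m))

noncomputable def toF (m : ℕ) (c : ℕ → ℝ) : ℝ →₀ ℝ :=
  ∑ i ∈ Finset.range (m+1), Finsupp.single ((i:ℝ)/m) (c i)

noncomputable def Astrat (m : ℕ) (t : ℕ) (h : Fin t → ℝ) : ℝ →₀ ℝ :=
  toF m (move m t (St m t h).1 (St m t h).2)

noncomputable def Wb (m : ℕ) (b : ℕ → ℝ) (t : ℕ) : ℕ → ℝ := (St m t (fun s : Fin t => b s.1)).1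
noncomputable def Db (m : ℕ) (b : ℕ → ℝ) (t : ℕ) : ℕ → ℝ := (St m t (fun s : Fin t => b s.1)).2
noncomputable def cb (m : ℕ) (b : ℕ → ℝ) (t : ℕ) : ℕ → ℝ := move m t (Wb m b t) (Db m b t)

lemma Wb_zero (m : ℕ) (b : ℕ → ℝ) (i : ℕ) : Wb m b 0 i = 0 := rfl
lemma Db_zero (m : ℕ) (b : ℕ → ℝ) (i : ℕ) : Db m b 0 i = 0 := rfl
lemma Wb_succ' (m : ℕ) (b : ℕ → ℝ) (t : ℕ) (i : ℕ) :
    Wb m b (t+1) i = Wb m b t i + cb m b t i := rfl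
lemma Db_succ' (m : ℕ) (b : ℕ → ℝ) (t : ℕ) (i : ℕ) :
    Db m b (t+1) i = Db m b t i + cb m b t i * (b t - (i:ℝ)/m) := rfl

/-! ### Finsupp facts -/

lemma toF_apply (m : ℕ) (c : ℕ → ℝ) (x : ℝ) :
    toF m c x = ∑ i ∈ Finset.range (m+1), if (i:ℝ)/m = x then c i else 0 := by
  rw [toF, Finsupp.finset_sum_apply]
  exact Finset.sum_congr rfl fun i _ => Finsupp.single_apply

lemma toF_nonneg (m : ℕ) (c : ℕ → ℝ) (hc : ∀ i, 0 ≤ c i) (x : ℝ) : 0 ≤ toF m c x := by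
  rw [toF_apply]
  apply Finset.sum_nonneg
  intro i _
  split_ifs
  · exact hc i
  · exact le_refl 0

lemma toF_total (m : ℕ) (c : ℕ → ℝ) :
    (toF m c).sum (fun _ a => a) = ∑ i ∈ Finset.range (m+1), c i := by
  rw [toF, ← Finsupp.sum_finset_sum_index (fun _ => rfl) (fun _ _ _ => rfl)]
  exact Finset.sum_congr rfl fun i _ => Finsupp.sum_single_index rfl

lemma toF_support (m : ℕ) (c : ℕ → ℝ) :
    (toF m c).support ⊆ (Finset.range (m+1)).image (fun i : ℕ => (i:ℝ)/(m:ℝ)) := by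
  classical
  refine (Finsupp.support_finset_sum).trans ?_
  intro x hx
  rw [Finset.mem_biUnion] at hx
  obtain ⟨i, hi, hxi⟩ := hx
  have := Finsupp.support_single_subset hxi
  rw [Finset.mem_singleton] at this
  rw [Finset.mem_image]
  exact ⟨i, hi, this.symm⟩

lemma grid_mem_Icc (m : ℕ) (i : ℕ) (hi : i ≤ m) : ((i:ℝ)/m) ∈ Set.Icc (0:ℝ) 1 := by
  rcases Nat.eq_zero_or_pos m with rfl | hm
  · interval_cases i
    simp
  · have hM : (0:ℝ) < m := by exact_mod_cast hm
    constructor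
    · positivity
    · rw [div_le_one hM]
      exact_mod_cast hi

lemma grid_inj (m : ℕ) (hm : 1 ≤ m) : ∀ i j : ℕ, (i:ℝ)/m = (j:ℝ)/m → i = j := by
  intro i j h
  have hM : (0:ℝ) < m := by exact_mod_cast hm
  have : (i:ℝ) = j := by
    field_simp at h
    exact_mod_cast h
  exact_mod_cast this

lemma toF_apply_grid (m : ℕ) (hm : 1 ≤ m) (c : ℕ → ℝ) (j : ℕ) (hj : j ∈ Finset.range (m+1)) :
    toF m c ((j:ℝ)/m) = c j := by
  rw [toF_apply]
  have h : ∀ i ∈ Finset.range (m+1),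
      (if (i:ℝ)/m = (j:ℝ)/m then c i else 0) = if i = j then c i else 0 := by
    intro i _
    congr 1
    simp only [eq_iff_iff]
    constructor
    · exact fun h => grid_inj m hm i j h
    · rintro rfl; rfl
  rw [Finset.sum_congr rfl h, Finset.sum_ite_eq' _ j c, if_pos hj]

/-! ### Trajectory invariants -/

section
variable (m : ℕ) (b : ℕ → ℝ)

lemma Wb_nonneg (t : ℕ) (j : ℕ) : 0 ≤ Wb m b t j := by
  induction t with
  | zero => simp [Wb_zero]
  | succ t ih =>
      rw [Wb_succ']
      have : 0 ≤ cb m b t j := move_nonneg m t (Wb m b t) (Db m b t) j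
      exact add_nonneg ih this

lemma Wb_mono (t : ℕ) (j : ℕ) : Wb m b t j ≤ Wb m b (t+1) j := by
  rw [Wb_succ']
  have : 0 ≤ cb m b t j := move_nonneg m t (Wb m b t) (Db m b t) j
  linarith

lemma Wb_le (t : ℕ) (j : ℕ) : Wb m b t j ≤ t := by
  induction t with
  | zero => simp [Wb_zero]
  | succ t ih =>
      rw [Wb_succ']
      have : cb m b t j ≤ 1 := move_le_one m t (Wb m b t) (Db m b t) j
      push_cast
      linarith

lemma Db_abs (hb : ∀ t, b t = 0 ∨ b t = 1) (t : ℕ) (j : ℕ) :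
    |Db m b t j| ≤ Wb m b t j := by
  induction t with
  | zero => simp [Wb_zero, Db_zero]
  | succ t ih =>
      rw [Wb_succ', Db_succ']
      rcases Nat.lt_or_ge m j with hj | hj
      · rw [show cb m b t j = 0 from move_zero_of_gt m t _ _ j hj]
        simpa using ih
      · have hc0 : 0 ≤ cb m b t j := move_nonneg m t (Wb m b t) (Db m b t) j
        have hc1 : cb m b t j ≤ 1 := move_le_one m t (Wb m b t) (Db m b t) j
        have hv : ((j:ℝ)/m) ∈ Set.Icc (0:ℝ) 1 := by
          rcases Nat.eq_zero_or_pos m with rfl | hm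
          · interval_cases j; simp
          · have hM : (0:ℝ) < m := by exact_mod_cast hm
            exact ⟨by positivity, by rw [div_le_one hM]; exact_mod_cast hj⟩
        have he : |b t - (j:ℝ)/m| ≤ 1 := by
          rw [abs_le]
          rcases hb t with h | h <;> rw [h] <;> constructor <;> linarith [hv.1, hv.2]
        calc |Db m b t j + cb m b t j * (b t - (j:ℝ)/m)|
            ≤ |Db m b t j| + |cb m b t j * (b t - (j:ℝ)/m)| := abs_add_le _ _
          _ ≤ Wb m b t j + cb m b t j := by
              have h1 : |cb m b t j * (b t - (j:ℝ)/m)| = cb m b t j * |b t - (j:ℝ)/m| := by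
                rw [abs_mul, abs_of_nonneg hc0]
              rw [h1]
              have h2 : cb m b t j * |b t - (j:ℝ)/m| ≤ cb m b t j * 1 := by
                apply mul_le_mul_of_nonneg_left he hc0
              linarith [ih]

lemma cb_early (s t : ℕ) (hst : s < t) (htm : t ≤ m) : cb m b s t = 0 := by
  unfold cb
  rw [move_init m s _ _ (by omega)]
  simp only
  have : t ≠ s := by omega
  simp [this]

lemma Wb_early (t : ℕ) (htm : t ≤ m) : Wb m b t t = 0 ∧ Db m b t t = 0 := by
  have key : ∀ s, s ≤ t → Wb m b s t = 0 ∧ Db m b s t = 0 := by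
    intro s hs
    induction s with
    | zero => simp [Wb_zero, Db_zero]
    | succ s ih =>
        have h1 := ih (by omega)
        have hc : cb m b s t = 0 := cb_early m b s t (by omega) htm
        rw [Wb_succ', Db_succ', hc, h1.1, h1.2]
        norm_num
  exact key t le_rfl

lemma Wb_one (t j : ℕ) (hj : j ≤ m) (hjt : j < t) : 1 ≤ Wb m b t j := by
  induction t with
  | zero => omega
  | succ t ih =>
      rcases Nat.lt_or_ge j t with h | h
      · have := Wb_mono m b t j
        linarith [ih h]
      · have : j = t := by omega
        subst this
        rw [Wb_succ']
        have hW0 : 0 ≤ Wb m b j j := Wb_nonneg m b j j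
        have hc : cb m b j j = 1 := by
          unfold cb
          rw [move_init m j _ _ hj]
          simp
        rw [hc]; linarith

end

/-! ### Potential -/

noncomputable def Phi (m : ℕ) (b : ℕ → ℝ) (t : ℕ) : ℝ :=
  ∑ j ∈ Finset.range (m+1), (Db m b t j)^2 / (Wb m b t j)
noncomputable def Lg (m : ℕ) (b : ℕ → ℝ) (t : ℕ) : ℝ :=
  ∑ j ∈ Finset.range (m+1), Real.log (max (Wb m b t j) 1)

lemma ebound (m : ℕ) (b : ℕ → ℝ) (hb : ∀ t, b t = 0 ∨ b t = 1) (t j : ℕ) (hj : j ≤ m) :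
    |b t - (j:ℝ)/m| ≤ 1 := by
  have hv : ((j:ℝ)/m) ∈ Set.Icc (0:ℝ) 1 := by
    rcases Nat.eq_zero_or_pos m with rfl | hmp
    · interval_cases j; simp
    · have hM : (0:ℝ) < m := by exact_mod_cast hmp
      exact ⟨by positivity, by rw [div_le_one hM]; exact_mod_cast hj⟩
  rw [abs_le]
  rcases hb t with h | h <;> rw [h] <;> constructor <;> linarith [hv.1, hv.2]

lemma master (m : ℕ) (hm : 1 ≤ m) (b : ℕ → ℝ) (hb : ∀ t, b t = 0 ∨ b t = 1) :
    ∀ t : ℕ, Phi m b t ≤ (min t (m+1) : ℕ) + 2*t/(m:ℝ)^2 + 3 * Lg m b t := by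
  intro t
  induction t with
  | zero =>
      have h1 : Phi m b 0 = 0 := by
        unfold Phi
        apply Finset.sum_eq_zero
        intro j _
        rw [Db_zero]
        norm_num
      have h2 : Lg m b 0 = 0 := by
        unfold Lg
        apply Finset.sum_eq_zero
        intro j _
        rw [Wb_zero]
        norm_num
      rw [h1, h2]; norm_num
  | succ t ih =>
      rcases le_or_gt t m with ht | ht
      · have hcb : cb m b t = fun j => if j = t then (1:ℝ) else 0 := move_init m t _ _ ht
        have htr : t ∈ Finset.range (m+1) := by simp; omega
        have hterm : ∀ j ∈ Finset.range (m+1),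
            (Db m b (t+1) j)^2 / (Wb m b (t+1) j)
            = (Db m b t j)^2 / (Wb m b t j) + (if j = t then (b t - (t:ℝ)/m)^2 else 0) := by
          intro j _
          rcases eq_or_ne j t with rfl | hne
          · have h0 := Wb_early m b j ht
            rw [Wb_succ', Db_succ', h0.1, h0.2, hcb]
            simp
          · have hc : cb m b t j = 0 := by rw [hcb]; simp [hne]
            rw [Wb_succ', Db_succ', hc]
            simp [hne]
        have hPhi : Phi m b (t+1) = Phi m b t + (b t - (t:ℝ)/m)^2 := by
          unfold Phi
          rw [Finset.sum_congr rfl hterm, Finset.sum_add_distrib,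
            Finset.sum_ite_eq' _ t (fun _ => (b t - (t:ℝ)/m)^2), if_pos htr]
        have hLg : Lg m b (t+1) = Lg m b t := by
          unfold Lg
          apply Finset.sum_congr rfl
          intro j _
          rcases eq_or_ne j t with rfl | hne
          · have h0 := Wb_early m b j ht
            rw [Wb_succ', h0.1, hcb]
            simp
          · have hc : cb m b t j = 0 := by rw [hcb]; simp [hne]
            rw [Wb_succ', hc, add_zero]
        have hsq : (b t - (t:ℝ)/m)^2 ≤ 1 := by
          nlinarith [abs_le.1 (ebound m b hb t t ht)]
        have hmin1 : min (t+1) (m+1) = t + 1 := by omega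
        have hmin2 : min t (m+1) = t := by omega
        rw [hPhi, hLg, hmin1]
        rw [hmin2] at ih
        have hMp : (0:ℝ) < (m:ℝ)^2 := by
          have : (0:ℝ) < (m:ℝ) := by exact_mod_cast hm
          positivity
        have hdist : 2*((t:ℝ)+1)/(m:ℝ)^2 = 2*(t:ℝ)/(m:ℝ)^2 + 2/(m:ℝ)^2 := by ring
        have h2m : (0:ℝ) ≤ 2/(m:ℝ)^2 := by positivity
        push_cast
        push_cast at ih
        linarith
      · have hmin : min (t+1) (m+1) = m+1 := by omega
        have hmin2 : min t (m+1) = m+1 := by omega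
        have key : Phi m b (t+1) - Phi m b t ≤ 2/(m:ℝ)^2 + 3 * (Lg m b (t+1) - Lg m b t) := by
          have hpp : ∀ j ∈ Finset.range (m+1),
              (Db m b (t+1) j)^2 / (Wb m b (t+1) j) - (Db m b t j)^2 / (Wb m b t j)
              ≤ cb m b t j * (2 * (Db m b t j / Wb m b t j) * (b t - (j:ℝ)/m)
                  - (Db m b t j / Wb m b t j)^2/2)
                + 3 * (Real.log (max (Wb m b (t+1) j) 1) - Real.log (max (Wb m b t j) 1)) := by
            intro j hj
            rw [Finset.mem_range] at hj
            have hj' : j ≤ m := by omega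
            have hw1 : 1 ≤ Wb m b t j := Wb_one m b t j hj' (by omega)
            have hl0 : 0 ≤ cb m b t j := move_nonneg m t _ _ j
            have hl1 : cb m b t j ≤ 1 := move_le_one m t _ _ j
            have hD : |Db m b t j| ≤ Wb m b t j := Db_abs m b hb t j
            have he : |b t - (j:ℝ)/m| ≤ 1 := ebound m b hb t j hj'
            have hmax1 : max (Wb m b t j) 1 = Wb m b t j := max_eq_left hw1
            have hmax2 : max (Wb m b (t+1) j) 1 = Wb m b (t+1) j := by
              apply max_eq_left
              rw [Wb_succ']; linarith
            rw [hmax1, hmax2, Wb_succ', Db_succ']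
            exact pp_bound hw1 hl0 hl1 hD he
          have hsum := Finset.sum_le_sum hpp
          rw [Finset.sum_sub_distrib, Finset.sum_add_distrib] at hsum
          have hmv := move_main m t (Wb m b t) (Db m b t) hm ht (b t) (hb t)
          have e3 : ∑ j ∈ Finset.range (m+1),
              3 * (Real.log (max (Wb m b (t+1) j) 1) - Real.log (max (Wb m b t j) 1))
              = 3 * (Lg m b (t+1) - Lg m b t) := by
            unfold Lg
            rw [← Finset.sum_sub_distrib, Finset.mul_sum]
          unfold Phi
          rw [e3] at hsum
          calc (∑ j ∈ Finset.range (m+1), (Db m b (t+1) j)^2 / (Wb m b (t+1) j))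
              - ∑ j ∈ Finset.range (m+1), (Db m b t j)^2 / (Wb m b t j)
              ≤ (∑ j ∈ Finset.range (m+1), cb m b t j *
                  (2 * (Db m b t j / Wb m b t j) * (b t - (j:ℝ)/m)
                    - (Db m b t j / Wb m b t j)^2/2))
                + 3 * (Lg m b (t+1) - Lg m b t) := hsum
            _ ≤ 2/(m:ℝ)^2 + 3 * (Lg m b (t+1) - Lg m b t) := by
                have : (∑ j ∈ Finset.range (m+1), cb m b t j *
                    (2 * (Db m b t j / Wb m b t j) * (b t - (j:ℝ)/m)
                      - (Db m b t j / Wb m b t j)^2/2)) ≤ 2/(m:ℝ)^2 := hmv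
                linarith
        rw [hmin]
        rw [hmin2] at ih
        have hdist : 2*((t:ℝ)+1)/(m:ℝ)^2 = 2*(t:ℝ)/(m:ℝ)^2 + 2/(m:ℝ)^2 := by ring
        push_cast
        push_cast at ih
        linarith [key]

/-! ### Calibration error equals the potential -/

section
variable (m : ℕ) (b : ℕ → ℝ)

lemma sum_cb (T : ℕ) (j : ℕ) : ∑ t : Fin T, cb m b t.1 j = Wb m b T j := by
  induction T with
  | zero => simp [Wb_zero]
  | succ T ih =>
      rw [Fin.sum_univ_castSucc]
      simp only [Fin.coe_castSucc, Fin.val_last]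
      rw [ih, Wb_succ']

lemma sum_bcb (T : ℕ) (j : ℕ) :
    ∑ t : Fin T, b t.1 * cb m b t.1 j = Db m b T j + (j:ℝ)/m * Wb m b T j := by
  induction T with
  | zero => simp [Wb_zero, Db_zero]
  | succ T ih =>
      rw [Fin.sum_univ_castSucc]
      simp only [Fin.coe_castSucc, Fin.val_last]
      rw [ih, Wb_succ', Db_succ']
      ring

lemma cal_eq (hm : 1 ≤ m) (hb : ∀ t, b t = 0 ∨ b t = 1) (T : ℕ) :
    calibrationError T (fun t : Fin T => toF m (cb m b t.1)) (fun t : Fin T => b t.1)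
      = Phi m b T := by
  classical
  set x : Fin T → (ℝ →₀ ℝ) := fun t => toF m (cb m b t.1) with hx
  set G : Finset ℝ := (Finset.range (m+1)).image (fun i : ℕ => (i:ℝ)/(m:ℝ)) with hG
  set F : ℝ → ℝ := fun p =>
    (∑ t : Fin T, x t p) * (p - (∑ t : Fin T, (b t.1) * x t p) / (∑ t : Fin T, x t p)) ^ 2
    with hF
  have hsub : (Finset.univ.biUnion (fun t : Fin T => (x t).support)) ⊆ G := by
    intro p hp
    rw [Finset.mem_biUnion] at hp
    obtain ⟨t, _, hpt⟩ := hp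
    exact toF_support m (cb m b t.1) hpt
  have hzero : ∀ p ∈ G, p ∉ (Finset.univ.biUnion (fun t : Fin T => (x t).support)) → F p = 0 := by
    intro p _ hp
    have : ∀ t : Fin T, x t p = 0 := by
      intro t
      by_contra hne
      exact hp (Finset.mem_biUnion.2 ⟨t, Finset.mem_univ t, Finsupp.mem_support_iff.2 hne⟩)
    rw [hF]
    simp only
    rw [Finset.sum_congr rfl (fun t _ => this t), Finset.sum_const_zero, zero_mul]
  have step1 : calibrationError T x (fun t : Fin T => b t.1) = ∑ p ∈ G, F p := by
    unfold calibrationError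
    exact Finset.sum_subset hsub (fun p hp hnp => hzero p hp hnp) |>.symm ▸ rfl
  have step2 : ∑ p ∈ G, F p = ∑ j ∈ Finset.range (m+1), F ((j:ℝ)/m) := by
    rw [hG]
    rw [Finset.sum_image]
    intro i hi j hj hij
    exact grid_inj m hm i j hij
  have step3 : ∀ j ∈ Finset.range (m+1), F ((j:ℝ)/m) = (Db m b T j)^2 / (Wb m b T j) := by
    intro j hj
    have hxa : ∀ t : Fin T, x t ((j:ℝ)/m) = cb m b t.1 j := by
      intro t
      rw [hx]
      exact toF_apply_grid m hm _ j hj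
    rw [hF]
    simp only
    rw [Finset.sum_congr rfl (fun t _ => hxa t),
      Finset.sum_congr rfl (fun t _ => by rw [hxa t] : ∀ t ∈ Finset.univ,
        b t.1 * x t ((j:ℝ)/m) = b t.1 * cb m b t.1 j)]
    rw [sum_cb, sum_bcb]
    rcases eq_or_lt_of_le (Wb_nonneg m b T j) with hW0 | hWpos
    · have hD0 : Db m b T j = 0 := by
        have h1 := Db_abs m b hb T j
        rw [← hW0] at h1
        have h2 := abs_nonneg (Db m b T j)
        have h3 : |Db m b T j| = 0 := le_antisymm h1 h2
        exact abs_eq_zero.1 h3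
      rw [← hW0, hD0]
      norm_num
    · have hWne : Wb m b T j ≠ 0 := ne_of_gt hWpos
      have harg : (j:ℝ)/m - (Db m b T j + (j:ℝ)/m * Wb m b T j) / Wb m b T j
          = - (Db m b T j / Wb m b T j) := by
        field_simp
        ring
      rw [harg, neg_sq]
      field_simp
  rw [step1, step2, Finset.sum_congr rfl step3]
  rfl

end

lemma Lg_le (m : ℕ) (b : ℕ → ℝ) (T : ℕ) (hT : 1 ≤ T) :
    Lg m b T ≤ (m+1) * Real.log T := by
  have hT1 : (1:ℝ) ≤ (T:ℝ) := by exact_mod_cast hT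
  have h : ∀ j ∈ Finset.range (m+1), Real.log (max (Wb m b T j) 1) ≤ Real.log T := by
    intro j _
    apply Real.log_le_log (by positivity)
    exact max_le ((Wb_le m b T j)) hT1
  calc Lg m b T ≤ ∑ j ∈ Finset.range (m+1), Real.log T := Finset.sum_le_sum h
    _ = (m+1) * Real.log T := by
        rw [Finset.sum_const, Finset.card_range]
        push_cast
        ring

lemma Astrat_valid (m : ℕ) (t : ℕ) (h : Fin t → ℝ) :
    (∀ s, 0 ≤ Astrat m t h s) ∧ ((Astrat m t h).sum fun _ a => a) = 1 ∧
      ∀ p ∈ (Astrat m t h).support, p ∈ Set.Icc (0 : ℝ) 1 := by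
  refine ⟨?_, ?_, ?_⟩
  · intro s
    exact toF_nonneg m _ (fun i => move_nonneg m t _ _ i) s
  · rw [Astrat, toF_total]
    exact move_sum m t _ _
  · intro p hp
    have := toF_support m _ hp
    rw [Finset.mem_image] at this
    obtain ⟨i, hi, rfl⟩ := this
    rw [Finset.mem_range] at hi
    exact grid_mem_Icc m i (by omega)

end CalProof

/-- **Online `ℓ₂`-calibration with `Õ(T^{1/3})` error.**
There is an absolute constant `C` so that for every horizon `T ≥ 1` there is a
forecasting strategy `A` (mapping past outcomes to a finitely supported
distribution on `[0,1]`) whose `ℓ₂`-calibration error against every outcome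
sequence `b ∈ {0,1}^T` is at most `C · T^{1/3} · log(T+1)`. -/
theorem online_l2_calibration :
    ∃ C : ℝ, 0 < C ∧
      ∀ T : ℕ, 1 ≤ T →
        ∃ A : (t : ℕ) → (Fin t → ℝ) → (ℝ →₀ ℝ),
          (∀ (t : ℕ) (h : Fin t → ℝ),
            (∀ s, 0 ≤ A t h s) ∧ ((A t h).sum fun _ a => a) = 1 ∧
              ∀ p ∈ (A t h).support, p ∈ Set.Icc (0 : ℝ) 1) ∧
          ∀ b : ℕ → ℝ, (∀ t, b t = 0 ∨ b t = 1) →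
            calibrationError T (fun t => A t.1 fun s => b s.1) (fun t => b t.1) ≤
              C * (T : ℝ) ^ ((1 : ℝ) / 3) * Real.log (T + 1) := by
  classical
  open CalProof in
  refine ⟨100, by norm_num, ?_⟩
  intro T hT
  set A : ℝ := (T:ℝ) ^ ((1:ℝ)/3) with hA
  have hT1 : (1:ℝ) ≤ (T:ℝ) := by exact_mod_cast hT
  have hT0 : (0:ℝ) < (T:ℝ) := by linarith
  have hA1 : 1 ≤ A := Real.one_le_rpow hT1 (by norm_num)
  have hA0 : 0 < A := by linarith
  set m : ℕ := ⌈A⌉₊ with hmdef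
  have hm1 : 1 ≤ m := by
    rw [hmdef]
    exact_mod_cast Nat.ceil_pos.2 hA0
  have hAm : A ≤ (m:ℝ) := Nat.le_ceil A
  have hmA : (m:ℝ) ≤ A + 1 := (Nat.ceil_lt_add_one hA0.le).le
  have hA3 : A^(3:ℕ) = (T:ℝ) := by
    rw [hA, ← Real.rpow_natCast ((T:ℝ) ^ ((1:ℝ)/3)) 3, ← Real.rpow_mul hT0.le]
    norm_num
  have hTA2 : (T:ℝ)/A^2 = A := by
    rw [← hA3]
    field_simp
  have hTm2 : (T:ℝ)/(m:ℝ)^2 ≤ A := by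
    rw [← hTA2]
    apply div_le_div_of_nonneg_left hT0.le (by positivity)
    nlinarith
  refine ⟨CalProof.Astrat m, fun t h => CalProof.Astrat_valid m t h, ?_⟩
  intro b hb
  have hceq : calibrationError T
      (fun t : Fin T => CalProof.Astrat m t.1 (fun s => b s.1)) (fun t : Fin T => b t.1)
      = CalProof.Phi m b T := CalProof.cal_eq m b hm1 hb T
  rw [hceq]
  have h1 := CalProof.master m hm1 b hb T
  have h2 := CalProof.Lg_le m b T hT
  have hlogT : Real.log T ≤ Real.log ((T:ℝ)+1) := by
    apply Real.log_le_log hT0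
    linarith
  have hlogT0 : 0 ≤ Real.log T := Real.log_nonneg hT1
  have hlog1 : 0 ≤ Real.log ((T:ℝ)+1) := le_trans hlogT0 hlogT
  have hlog2 : (1:ℝ)/2 ≤ Real.log ((T:ℝ)+1) := by
    have l2 : Real.log 2 ≤ Real.log ((T:ℝ)+1) := by
      apply Real.log_le_log (by norm_num)
      linarith
    have := Real.log_two_gt_d9
    linarith
  have hmin : ((min T (m+1) : ℕ) : ℝ) ≤ (m:ℝ) + 1 := by
    have : min T (m+1) ≤ m+1 := min_le_right _ _
    exact_mod_cast this
  have hm3A : (m:ℝ) + 1 ≤ 3*A := by linarith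
  have hLgf : CalProof.Lg m b T ≤ 3*A * Real.log ((T:ℝ)+1) := by
    calc CalProof.Lg m b T ≤ ((m:ℝ)+1) * Real.log T := h2
      _ ≤ (3*A) * Real.log ((T:ℝ)+1) := by
          apply mul_le_mul hm3A hlogT hlogT0 (by linarith)
  have hdiv : 2*(T:ℝ)/(m:ℝ)^2 ≤ 2*A := by
    have hh : 2*(T:ℝ)/(m:ℝ)^2 = 2*((T:ℝ)/(m:ℝ)^2) := by ring
    rw [hh]; linarith
  have hfinal : CalProof.Phi m b T ≤ 100 * A * Real.log ((T:ℝ)+1) := by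
    have c1 : CalProof.Phi m b T ≤ ((m:ℝ)+1) + 2*(T:ℝ)/(m:ℝ)^2 + 3 * CalProof.Lg m b T := by
      calc CalProof.Phi m b T
          ≤ ((min T (m+1) : ℕ):ℝ) + 2*(T:ℝ)/(m:ℝ)^2 + 3 * CalProof.Lg m b T := h1
        _ ≤ ((m:ℝ)+1) + 2*(T:ℝ)/(m:ℝ)^2 + 3 * CalProof.Lg m b T := by linarith
    have c2 : CalProof.Phi m b T ≤ 3*A + 2*A + 9*A*Real.log ((T:ℝ)+1) := by
      calc CalProof.Phi m b T ≤ ((m:ℝ)+1) + 2*(T:ℝ)/(m:ℝ)^2 + 3 * CalProof.Lg m b T := c1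
        _ ≤ 3*A + 2*A + 9*A*Real.log ((T:ℝ)+1) := by nlinarith [hLgf, hdiv, hm3A]
    have c3 : 5*A ≤ 10*A*Real.log ((T:ℝ)+1) := by nlinarith
    nlinarith
  calc CalProof.Phi m b T ≤ 100 * A * Real.log ((T:ℝ)+1) := hfinal
    _ = 100 * (T:ℝ) ^ ((1:ℝ)/3) * Real.log ((T:ℝ)+1) := by rw [hA]
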